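/- Let A be a nonzero polynomial in F_2[x], and write d_k = deg(A_k). Then for every k ≥ 1: d_{2k+1} ≤ d_{2k-1} ≤ deg(A), d_{2k} = d_{2k-1} + 2, and d_{2k} = d_{2k+1} + a_{2k} + b_{2k}. -/
import Mathlib


open Polynomial Finset

/-- The polynomial `M = x^2 + x + 1` over `F_2`. -/
noncomputable def M : Polynomial (ZMod 2) := X ^ 2 + X + 1

/-- The odd part of a binary polynomial: `P` divided by `x^{val_x(P)} (x+1)^{val_{x+1}(P)}`. -/
noncomputable def oddPart (P : Polynomial (ZMod 2)) : Polynomial (ZMod 2) :=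
  P / (X ^ P.rootMultiplicity 0 * (X + 1) ^ P.rootMultiplicity 1)

/-- The Collatz sequence of a binary polynomial `A`:
`A_0 = A`, `A_{2k+1} = oddPart A_{2k}`, `A_{2k+2} = 1 + M * A_{2k+1}`. -/
noncomputable def collatz (A : Polynomial (ZMod 2)) : ℕ → Polynomial (ZMod 2)
  | 0 => A
  | n + 1 => if n % 2 = 0 then oddPart (collatz A n) else 1 + M * collatz A n

/-- `a_k`: the multiplicity of `x` in `A_k`. -/
noncomputable def aSeq (A : Polynomial (ZMod 2)) (k : ℕ) : ℕ :=
  (collatz A k).rootMultiplicity 0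

/-- `b_k`: the multiplicity of `x + 1` in `A_k`. -/
noncomputable def bSeq (A : Polynomial (ZMod 2)) (k : ℕ) : ℕ :=
  (collatz A k).rootMultiplicity 1

/-- The length `ℓ_A = m + 1`, where `m` is the least nonnegative integer
with `A_{2m+1} = 1`. -/
noncomputable def collatzLength (A : Polynomial (ZMod 2)) : ℕ :=
  sInf {m : ℕ | collatz A (2 * m + 1) = 1} + 1

lemma Xp1 : (X - C (1:ZMod 2)) = X + 1 := by
  rw [sub_eq_add_neg, CharTwo.neg_eq, C_1]

lemma coprime_X_Xp1 : IsCoprime (X : Polynomial (ZMod 2)) (X + 1) := by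
  exact ⟨1, 1, by rw [one_mul, one_mul, ← add_assoc, CharTwo.add_self_eq_zero, zero_add]⟩

lemma dvd_aux (P : Polynomial (ZMod 2)) :
    X ^ P.rootMultiplicity 0 * (X + 1) ^ P.rootMultiplicity 1 ∣ P := by
  apply (coprime_X_Xp1.pow).mul_dvd
  · have := P.pow_rootMultiplicity_dvd 0; simpa using this
  · have := P.pow_rootMultiplicity_dvd 1; rwa [Xp1] at this

lemma oddPart_spec (P : Polynomial (ZMod 2)) :
    X ^ P.rootMultiplicity 0 * (X + 1) ^ P.rootMultiplicity 1 * oddPart P = P := by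
  apply EuclideanDomain.mul_div_cancel'
  · apply mul_ne_zero (pow_ne_zero _ X_ne_zero) (pow_ne_zero _ ?_)
    intro h
    have := congrArg (eval 0) h
    simp at this
  · exact dvd_aux P

lemma oddPart_ne_zero {P : Polynomial (ZMod 2)} (hP : P ≠ 0) : oddPart P ≠ 0 := by
  intro h
  rw [← oddPart_spec P, h, mul_zero] at hP
  exact hP rfl

lemma zmod2_eq_one {x : ZMod 2} (h : x ≠ 0) : x = 1 := by revert x; decide

lemma rm_X_pow (n : ℕ) : rootMultiplicity (0 : ZMod 2) ((X : Polynomial (ZMod 2)) ^ n) = n := by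
  have := rootMultiplicity_X_sub_C_pow (R := ZMod 2) (a := 0) n
  simpa using this

lemma rm_Xp1_pow (n : ℕ) : rootMultiplicity (1 : ZMod 2) (((X : Polynomial (ZMod 2)) + 1) ^ n) = n := by
  have := rootMultiplicity_X_sub_C_pow (R := ZMod 2) (a := 1) n
  rwa [Xp1] at this

lemma Xp1_ne_zero : ((X : Polynomial (ZMod 2)) + 1) ≠ 0 := by
  intro h; have := congrArg (eval 0) h; simp at this

lemma rm_zero_Xp1_pow (n : ℕ) :
    rootMultiplicity (0 : ZMod 2) (((X : Polynomial (ZMod 2)) + 1) ^ n) = 0 := by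
  rw [rootMultiplicity_eq_zero_iff]
  intro h
  exfalso
  simp [IsRoot, eval_pow] at h

lemma rm_one_X_pow (n : ℕ) :
    rootMultiplicity (1 : ZMod 2) ((X : Polynomial (ZMod 2)) ^ n) = 0 := by
  rw [rootMultiplicity_eq_zero_iff]
  intro h
  exfalso
  simp [IsRoot, eval_pow] at h

lemma oddPart_rm0 {P : Polynomial (ZMod 2)} (hP : P ≠ 0) :
    rootMultiplicity 0 (oddPart P) = 0 := by
  have h := oddPart_spec P
  have hne : X ^ P.rootMultiplicity 0 * (X + 1) ^ P.rootMultiplicity 1 * oddPart P ≠ 0 := by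
    rw [h]; exact hP
  have h1 := rootMultiplicity_mul (x := (0 : ZMod 2)) hne
  rw [rootMultiplicity_mul (x := (0 : ZMod 2)) (mul_ne_zero_iff.1 hne).1, rm_X_pow,
    rm_zero_Xp1_pow, h] at h1
  omega

lemma oddPart_rm1 {P : Polynomial (ZMod 2)} (hP : P ≠ 0) :
    rootMultiplicity 1 (oddPart P) = 0 := by
  have h := oddPart_spec P
  have hne : X ^ P.rootMultiplicity 0 * (X + 1) ^ P.rootMultiplicity 1 * oddPart P ≠ 0 := by
    rw [h]; exact hP
  have h1 := rootMultiplicity_mul (x := (1 : ZMod 2)) hne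
  rw [rootMultiplicity_mul (x := (1 : ZMod 2)) (mul_ne_zero_iff.1 hne).1, rm_Xp1_pow,
    rm_one_X_pow, h] at h1
  omega

lemma oddPart_eval0 {P : Polynomial (ZMod 2)} (hP : P ≠ 0) : eval 0 (oddPart P) = 1 := by
  apply zmod2_eq_one
  intro h
  have := (rootMultiplicity_pos (oddPart_ne_zero hP)).2 h
  rw [oddPart_rm0 hP] at this; omega

lemma oddPart_eval1 {P : Polynomial (ZMod 2)} (hP : P ≠ 0) : eval 1 (oddPart P) = 1 := by
  apply zmod2_eq_one
  intro h
  have := (rootMultiplicity_pos (oddPart_ne_zero hP)).2 h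
  rw [oddPart_rm1 hP] at this; omega

lemma natDegree_oddPart {P : Polynomial (ZMod 2)} (hP : P ≠ 0) :
    P.natDegree = P.rootMultiplicity 0 + P.rootMultiplicity 1 + (oddPart P).natDegree := by
  conv_lhs => rw [← oddPart_spec P]
  rw [natDegree_mul (mul_ne_zero (pow_ne_zero _ X_ne_zero) (pow_ne_zero _ Xp1_ne_zero))
    (oddPart_ne_zero hP), natDegree_mul (pow_ne_zero _ X_ne_zero) (pow_ne_zero _ Xp1_ne_zero),
    natDegree_pow, natDegree_pow, natDegree_X]
  have : ((X : Polynomial (ZMod 2)) + 1).natDegree = 1 := by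
    rw [← Xp1]; exact natDegree_X_sub_C _
  rw [this]; ring

lemma M_ne_zero : M ≠ 0 := by
  intro h; have := congrArg (eval 0) h; simp [M] at this

lemma natDegree_M : M.natDegree = 2 := by
  unfold M; compute_degree!

lemma eval0_M : eval 0 M = 1 := by simp [M]
lemma eval1_M : eval 1 M = 1 := by simp [M]; decide

lemma one_add_M_mul_ne_zero {Q : Polynomial (ZMod 2)} (hQ : Q ≠ 0) : 1 + M * Q ≠ 0 := by
  intro h
  have h2 : (M * Q).natDegree = 2 + Q.natDegree := by
    rw [natDegree_mul M_ne_zero hQ, natDegree_M]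
  have h3 : (1 + M * Q).natDegree = (M * Q).natDegree := by
    apply natDegree_add_eq_right_of_natDegree_lt
    simp [h2]
  rw [h] at h3; simp [h2] at h3; omega

lemma natDegree_one_add_M_mul {Q : Polynomial (ZMod 2)} (hQ : Q ≠ 0) :
    (1 + M * Q).natDegree = Q.natDegree + 2 := by
  have h2 : (M * Q).natDegree = 2 + Q.natDegree := by
    rw [natDegree_mul M_ne_zero hQ, natDegree_M]
  rw [natDegree_add_eq_right_of_natDegree_lt (by simp [h2]), h2, add_comm]

lemma collatz_odd (A : Polynomial (ZMod 2)) (k : ℕ) :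
    collatz A (2 * k + 1) = oddPart (collatz A (2 * k)) := by
  rw [collatz]; simp [Nat.mul_mod_right]

lemma collatz_even (A : Polynomial (ZMod 2)) (k : ℕ) :
    collatz A (2 * k + 2) = 1 + M * collatz A (2 * k + 1) := by
  show collatz A ((2 * k + 1) + 1) = _
  rw [collatz]
  have : (2 * k + 1) % 2 = 1 := by omega
  simp [this]

lemma collatz_ne_zero {A : Polynomial (ZMod 2)} (hA : A ≠ 0) : ∀ n, collatz A n ≠ 0 := by
  intro n
  induction n with
  | zero => exact hA
  | succ n ih =>
    rw [collatz]
    split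
    · exact oddPart_ne_zero ih
    · exact one_add_M_mul_ne_zero ih

lemma collatz_odd_eval0 {A : Polynomial (ZMod 2)} (hA : A ≠ 0) (k : ℕ) :
    eval 0 (collatz A (2 * k + 1)) = 1 := by
  rw [collatz_odd]; exact oddPart_eval0 (collatz_ne_zero hA _)

lemma collatz_odd_eval1 {A : Polynomial (ZMod 2)} (hA : A ≠ 0) (k : ℕ) :
    eval 1 (collatz A (2 * k + 1)) = 1 := by
  rw [collatz_odd]; exact oddPart_eval1 (collatz_ne_zero hA _)

lemma a_pos {A : Polynomial (ZMod 2)} (hA : A ≠ 0) (k : ℕ) :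
    1 ≤ aSeq A (2 * k + 2) := by
  have h : (collatz A (2 * k + 2)).IsRoot 0 := by
    rw [collatz_even]
    simp [IsRoot, eval0_M, collatz_odd_eval0 hA k]
    decide
  exact (rootMultiplicity_pos (collatz_ne_zero hA _)).2 h

lemma b_pos {A : Polynomial (ZMod 2)} (hA : A ≠ 0) (k : ℕ) :
    1 ≤ bSeq A (2 * k + 2) := by
  have h : (collatz A (2 * k + 2)).IsRoot 1 := by
    rw [collatz_even]
    simp [IsRoot, eval1_M, collatz_odd_eval1 hA k]
    decide
  exact (rootMultiplicity_pos (collatz_ne_zero hA _)).2 h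

lemma key {A : Polynomial (ZMod 2)} (hA : A ≠ 0) (m : ℕ) :
    (collatz A (2 * m + 3)).natDegree ≤ (collatz A (2 * m + 1)).natDegree ∧
    (collatz A (2 * m + 2)).natDegree = (collatz A (2 * m + 1)).natDegree + 2 ∧
    (collatz A (2 * m + 2)).natDegree
      = (collatz A (2 * m + 3)).natDegree + aSeq A (2 * m + 2) + bSeq A (2 * m + 2) := by
  have hd2 : (collatz A (2 * m + 2)).natDegree = (collatz A (2 * m + 1)).natDegree + 2 := by
    rw [collatz_even]; exact natDegree_one_add_M_mul (collatz_ne_zero hA _)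
  have hsplit : (collatz A (2 * m + 2)).natDegree
      = aSeq A (2 * m + 2) + bSeq A (2 * m + 2) + (collatz A (2 * m + 3)).natDegree := by
    have h := natDegree_oddPart (collatz_ne_zero hA (2 * m + 2))
    have h3 : collatz A (2 * m + 3) = oddPart (collatz A (2 * m + 2)) := by
      have := collatz_odd A (m + 1)
      rw [show 2 * (m + 1) + 1 = 2 * m + 3 by omega, show 2 * (m + 1) = 2 * m + 2 by omega] at this
      exact this
    rw [h3]
    exact h
  have ha := a_pos hA m
  have hb := b_pos hA m
  omega

lemma odd_le {A : Polynomial (ZMod 2)} (hA : A ≠ 0) : ∀ m,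
    (collatz A (2 * m + 1)).natDegree ≤ A.natDegree := by
  intro m
  induction m with
  | zero =>
    have h := natDegree_oddPart hA
    have h1 : collatz A 1 = oddPart A := collatz_odd A 0
    rw [show 2 * 0 + 1 = 1 by omega, h1]
    omega
  | succ m ih =>
    have := (key hA m).1
    rw [show 2 * (m + 1) + 1 = 2 * m + 3 by omega]
    omega

theorem degrees_of_collatz_terms (A : Polynomial (ZMod 2)) (hA : A ≠ 0) :
    ∀ k : ℕ, 1 ≤ k →
      (collatz A (2 * k + 1)).natDegree ≤ (collatz A (2 * k - 1)).natDegree ∧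
      (collatz A (2 * k - 1)).natDegree ≤ A.natDegree ∧
      (collatz A (2 * k)).natDegree = (collatz A (2 * k - 1)).natDegree + 2 ∧
      (collatz A (2 * k)).natDegree
        = (collatz A (2 * k + 1)).natDegree + aSeq A (2 * k) + bSeq A (2 * k) := by
  intro k hk
  obtain ⟨m, rfl⟩ : ∃ m, k = m + 1 := ⟨k - 1, by omega⟩
  rw [show 2 * (m + 1) + 1 = 2 * m + 3 by omega, show 2 * (m + 1) - 1 = 2 * m + 1 by omega,
    show 2 * (m + 1) = 2 * m + 2 by omega]
  obtain ⟨h1, h2, h3⟩ := key hA m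
  exact ⟨h1, odd_le hA m, h2, h3⟩
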